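/- Fix n ≥ 1, M ≥ 1, and an n×n symmetric positive semidefinite matrix Q with Q_{jj} = 1 for all j and |Q_{jj'}| ≤ 1 for all j, j′. For every ε > 0 there exist δ ∈ (0, ε) and N₀ such that for all N ≥ N₀ the following holds: if σ ∈ Q_N^ε and ω ∈ Ω_M^{ε/2,δ}, then the transformed concatenated configuration ρ̃ = (σ̃, ω̃) ∈ (ℝ^{N+M})^n, defined coordinatewise by σ̃(j) = a_{M+1}(ω(j))·σ(j) and ω̃_i(j) = a_i(ω(j))·ω_i(j) for i ≤ M, satisfies ‖ R(ρ̃, ρ̃) − Q ‖_∞ ≤ ε, where the overlap R(ρ̃,ρ̃) is normalized by N+M. -/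

import Mathlib

open Matrix Real

/-- The entrywise supremum norm `‖M‖_∞ = max_{i,j} |M_{ij}|` of a matrix. -/
noncomputable def supNorm {n : ℕ} (M : Matrix (Fin n) (Fin n) ℝ) : ℝ :=
  ⨆ i, ⨆ j, |M i j|

/-- The `n × n` overlap matrix of two configurations in `(ℝ^K)^n`:
`R(ρ,ρ')_{jj'} = (1/K) ⟨ρ(j), ρ'(j')⟩`. -/
noncomputable def overlap {n K : ℕ} (ρ ρ' : Fin n → Fin K → ℝ) :
    Matrix (Fin n) (Fin n) ℝ :=
  Matrix.of fun j j' => (1 / (K : ℝ)) * ∑ i, ρ j i * ρ' j' i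

/-- The Poincaré-limit coefficients `a_ℓ(x) = ∏_{j=1}^{ℓ-1} √(1 + (1 - x_j²)/(M+N-j))`
for `x ∈ ℝ^M` (so `a₁ = 1`). -/
noncomputable def coeff (M N : ℕ) (x : Fin M → ℝ) (ℓ : ℕ) : ℝ :=
  ∏ j ∈ Finset.univ.filter (fun j : Fin M => (j : ℕ) + 1 < ℓ),
    Real.sqrt (1 + (1 - x j ^ 2) / ((M : ℝ) + N - ((j : ℕ) + 1)))

lemma supNorm_aux {n : ℕ} (A : Matrix (Fin n) (Fin n) ℝ) (i j : Fin n) :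
    |A i j| ≤ ⨆ i, ⨆ j, |A i j| := by
  have h1 : BddAbove (Set.range fun j' => |A i j'|) := (Set.finite_range _).bddAbove
  have h2 : BddAbove (Set.range fun i' => ⨆ j', |A i' j'|) := (Set.finite_range _).bddAbove
  exact le_trans (le_ciSup h1 j) (le_ciSup h2 i)

lemma supNorm_le_aux {n : ℕ} [Nonempty (Fin n)] (A : Matrix (Fin n) (Fin n) ℝ) {ε : ℝ}
    (h : ∀ i j, |A i j| ≤ ε) : (⨆ i, ⨆ j, |A i j|) ≤ ε :=
  ciSup_le fun i => ciSup_le fun j => h i j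

lemma abs_sub_one_le_sq {a : ℝ} (ha : 0 ≤ a) : |a - 1| ≤ |a ^ 2 - 1| := by
  rw [show a ^ 2 - 1 = (a - 1) * (a + 1) by ring, abs_mul]
  have h1 : 1 ≤ |a + 1| := by rw [abs_of_nonneg (by linarith)]; linarith
  exact le_mul_of_one_le_right (abs_nonneg _) h1

lemma abs_mul_le_of_sq_le {a b C : ℝ} (ha : a ^ 2 ≤ C) (hb : b ^ 2 ≤ C) : |a * b| ≤ C := by
  rw [abs_mul]
  nlinarith [sq_nonneg (|a| - |b|), sq_abs a, sq_abs b]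

lemma prod_one_add_err {ι : Type*} (s : Finset ι) (u : ι → ℝ) (h : ∀ j ∈ s, |u j| ≤ 1) :
    |∏ j ∈ s, (1 + u j) - 1 - ∑ j ∈ s, u j| ≤ (∑ j ∈ s, |u j|) ^ 2 * 3 ^ s.card := by
  induction s using Finset.cons_induction with
  | empty => simp
  | cons a s ha ih =>
    rw [Finset.prod_cons, Finset.sum_cons, Finset.sum_cons, Finset.card_cons]
    have h1 := h a (Finset.mem_cons_self a s)
    have ih' := ih (fun j hj => h j (Finset.mem_cons_of_mem hj))
    have hT : |∑ j ∈ s, u j| ≤ ∑ j ∈ s, |u j| := Finset.abs_sum_le_sum_abs _ _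
    have hT'0 : (0:ℝ) ≤ ∑ j ∈ s, |u j| := Finset.sum_nonneg fun j _ => abs_nonneg _
    have h3one : (1:ℝ) ≤ 3 ^ s.card := by
      calc (1:ℝ) = 1 ^ s.card := (one_pow _).symm
      _ ≤ 3 ^ s.card := pow_le_pow_left₀ zero_le_one (by norm_num) _
    have key : (1 + u a) * ∏ j ∈ s, (1 + u j) - 1 - (u a + ∑ j ∈ s, u j)
        = u a * (∑ j ∈ s, u j) + (1 + u a) * ((∏ j ∈ s, (1 + u j)) - 1 - ∑ j ∈ s, u j) := by
      ring
    rw [key]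
    have habs : |1 + u a| ≤ 2 := by
      calc |1 + u a| ≤ |(1:ℝ)| + |u a| := abs_add_le _ _
      _ ≤ 2 := by rw [abs_one]; linarith
    calc |u a * (∑ j ∈ s, u j) + (1 + u a) * ((∏ j ∈ s, (1 + u j)) - 1 - ∑ j ∈ s, u j)|
        ≤ |u a| * |∑ j ∈ s, u j| + |1 + u a| * |(∏ j ∈ s, (1 + u j)) - 1 - ∑ j ∈ s, u j| := by
          rw [← abs_mul, ← abs_mul]; exact abs_add_le _ _
      _ ≤ |u a| * (∑ j ∈ s, |u j|) + 2 * ((∑ j ∈ s, |u j|) ^ 2 * 3 ^ s.card) :=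
          add_le_add (mul_le_mul_of_nonneg_left hT (abs_nonneg _))
            (mul_le_mul habs ih' (abs_nonneg _) (by norm_num))
      _ ≤ (|u a| + ∑ j ∈ s, |u j|) ^ 2 * 3 ^ (s.card + 1) := by
          rw [show (3:ℝ) ^ (s.card+1) = 3 ^ s.card * 3 from pow_succ 3 s.card]
          have hz : (0:ℝ) ≤ |u a| := abs_nonneg _
          generalize hzz : |u a| = z at *
          generalize hww : (∑ j ∈ s, |u j|) = w at *
          generalize hpp : (3:ℝ) ^ s.card = p at *
          nlinarith [mul_nonneg (mul_nonneg (by linarith : (0:ℝ) ≤ p) hz) hT'0,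
            mul_nonneg (mul_nonneg (by linarith : (0:ℝ) ≤ p) hz) hz,
            mul_nonneg (mul_nonneg (by linarith : (0:ℝ) ≤ p) hT'0) hT'0,
            mul_nonneg (mul_nonneg (by linarith : (0:ℝ) ≤ p - 1) hz) hT'0]


lemma sq_le_two_mul {M : ℕ} {δ : ℝ} (hδ1 : δ ≤ 1) {y : Fin M → ℝ}
    (hy : |∑ i, y i ^ 2 - (M:ℝ)| ≤ δ * M) (i : Fin M) : y i ^ 2 ≤ 2 * M := by
  have hM0 : (0:ℝ) ≤ M := Nat.cast_nonneg M
  have h1 : ∑ i, y i ^ 2 ≤ (M:ℝ) + δ * M := by have := (abs_le.mp hy).2; linarith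
  have h2 : y i ^ 2 ≤ ∑ i, y i ^ 2 :=
    Finset.single_le_sum (f := fun i => y i ^ 2) (fun i _ => sq_nonneg _) (Finset.mem_univ i)
  nlinarith

lemma u_bound {M N : ℕ} (hN : (1:ℝ) ≤ N) {y : Fin M → ℝ} (j : Fin M)
    (hysq : y j ^ 2 ≤ 2 * M) :
    |(1 - y j ^ 2) / ((M : ℝ) + N - ((j : ℕ) + 1))| ≤ (1 + 2*(M:ℝ))/(N:ℝ) := by
  have hM0 : (0:ℝ) ≤ M := Nat.cast_nonneg M
  have hj : ((j:ℕ):ℝ) + 1 ≤ (M:ℝ) := by exact_mod_cast j.isLt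
  have hD : (N:ℝ) ≤ (M : ℝ) + N - ((j : ℕ) + 1) := by linarith
  have hDpos : (0:ℝ) < (M : ℝ) + N - ((j : ℕ) + 1) := by linarith
  rw [abs_div, abs_of_pos hDpos]
  apply div_le_div₀ (by positivity) ?_ (by linarith) hD
  rw [abs_le]
  constructor <;> nlinarith [sq_nonneg (y j)]

lemma coeff_sq (M N : ℕ) (y : Fin M → ℝ)
    (h : ∀ j : Fin M, 0 ≤ 1 + (1 - y j ^ 2) / ((M : ℝ) + N - ((j : ℕ) + 1))) (ℓ : ℕ) :
    0 ≤ coeff M N y ℓ ∧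
    coeff M N y ℓ ^ 2 = ∏ j ∈ Finset.univ.filter (fun j : Fin M => (j : ℕ) + 1 < ℓ),
      (1 + (1 - y j ^ 2) / ((M : ℝ) + N - ((j : ℕ) + 1))) := by
  constructor
  · exact Finset.prod_nonneg fun j _ => Real.sqrt_nonneg _
  · rw [coeff, ← Finset.prod_pow]
    exact Finset.prod_congr rfl fun j _ => Real.sq_sqrt (h j)

lemma prod_close {M : ℕ} (u : Fin M → ℝ) {c : ℝ} (hc0 : 0 ≤ c) (hc2 : c ≤ 1)
    (h : ∀ j, |u j| ≤ c) (s : Finset (Fin M)) :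
    |∏ j ∈ s, (1 + u j) - 1| ≤ (M:ℝ) * c + ((M:ℝ) * c) ^ 2 * 3 ^ M := by
  have h1 : ∀ j ∈ s, |u j| ≤ 1 := fun j _ => le_trans (h j) hc2
  have h2 := prod_one_add_err s u h1
  have hcard : (s.card : ℝ) ≤ (M:ℝ) := by
    exact_mod_cast le_trans (Finset.card_le_univ s) (le_of_eq (by simp))
  have hsum : ∑ j ∈ s, |u j| ≤ (M:ℝ) * c := by
    calc ∑ j ∈ s, |u j| ≤ ∑ _j ∈ s, c := Finset.sum_le_sum (fun j _ => h j)
    _ = s.card * c := by rw [Finset.sum_const, nsmul_eq_mul]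
    _ ≤ (M:ℝ) * c := mul_le_mul_of_nonneg_right hcard hc0
  have hsum0 : (0:ℝ) ≤ ∑ j ∈ s, |u j| := Finset.sum_nonneg fun j _ => abs_nonneg _
  have habs : |∑ j ∈ s, u j| ≤ (M:ℝ) * c := le_trans (Finset.abs_sum_le_sum_abs _ _) hsum
  have h3 : (3:ℝ) ^ s.card ≤ 3 ^ M :=
    pow_le_pow_right₀ (by norm_num) (by simpa using Finset.card_le_univ s)
  calc |∏ j ∈ s, (1 + u j) - 1|
      = |(∑ j ∈ s, u j) + (∏ j ∈ s, (1 + u j) - 1 - ∑ j ∈ s, u j)| := by ring_nf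
    _ ≤ |∑ j ∈ s, u j| + |∏ j ∈ s, (1 + u j) - 1 - ∑ j ∈ s, u j| := abs_add_le _ _
    _ ≤ (M:ℝ) * c + (∑ j ∈ s, |u j|) ^ 2 * 3 ^ s.card := add_le_add habs h2
    _ ≤ (M:ℝ) * c + ((M:ℝ) * c) ^ 2 * 3 ^ M :=
        add_le_add_right (mul_le_mul (pow_le_pow_left₀ hsum0 hsum 2) h3 (by positivity)
          (by positivity)) _

lemma coeff_close_one {M N : ℕ} (hN : (1:ℝ) ≤ N) {δ : ℝ} (hδ0 : 0 ≤ δ) (hδ1 : δ ≤ 1)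
    (hc : (1 + 2*(M:ℝ))/(N:ℝ) ≤ 1/2) {y : Fin M → ℝ}
    (hy : |∑ i, y i ^ 2 - (M:ℝ)| ≤ δ * M) :
    (∀ ℓ : ℕ, 0 ≤ coeff M N y ℓ) ∧
    |coeff M N y (M+1) ^ 2 - 1| ≤
      (M:ℝ)*δ/N + (M:ℝ)^2*(1+2*M)/N^2 + ((M:ℝ)*((1+2*(M:ℝ))/N))^2 * 3^M ∧
    (∀ i : Fin M, |coeff M N y ((i:ℕ)+1) ^ 2 - 1| ≤
      (M:ℝ)*((1+2*(M:ℝ))/N) + ((M:ℝ)*((1+2*(M:ℝ))/N))^2 * 3^M) := by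
  have hM0 : (0:ℝ) ≤ M := Nat.cast_nonneg M
  have hN0 : (0:ℝ) < N := by linarith
  have hc0 : (0:ℝ) ≤ (1 + 2*(M:ℝ))/(N:ℝ) := by positivity
  have hc1 : (1 + 2*(M:ℝ))/(N:ℝ) ≤ 1 := le_trans hc (by norm_num)
  have husq : ∀ i, y i ^ 2 ≤ 2 * M := fun i => sq_le_two_mul hδ1 hy i
  have hu : ∀ j : Fin M, |(1 - y j ^ 2) / ((M : ℝ) + N - ((j : ℕ) + 1))| ≤ (1 + 2*(M:ℝ))/(N:ℝ) :=
    fun j => u_bound hN j (husq j)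
  have hu1 : ∀ j : Fin M, |(1 - y j ^ 2) / ((M : ℝ) + N - ((j : ℕ) + 1))| ≤ 1 :=
    fun j => le_trans (hu j) hc1
  have hpos : ∀ j : Fin M, 0 ≤ 1 + (1 - y j ^ 2) / ((M : ℝ) + N - ((j : ℕ) + 1)) := by
    intro j
    have := (abs_le.mp (hu1 j)).1
    linarith
  refine ⟨fun ℓ => (coeff_sq M N y hpos ℓ).1, ?_, ?_⟩
  · rw [(coeff_sq M N y hpos (M+1)).2]
    have huniv : Finset.univ.filter (fun j : Fin M => (j:ℕ)+1 < M+1) = Finset.univ :=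
      Finset.filter_true_of_mem (fun j _ => Nat.succ_lt_succ j.isLt)
    rw [huniv]
    -- error term pointwise
    have herr : ∀ j : Fin M, |(1 - y j ^ 2) * (1/((M : ℝ) + N - ((j : ℕ) + 1)) - 1/N)|
        ≤ (1+2*(M:ℝ)) * ((M:ℝ)/N^2) := by
      intro j
      have hj : ((j:ℕ):ℝ) + 1 ≤ (M:ℝ) := by exact_mod_cast j.isLt
      have hD : (N:ℝ) ≤ (M : ℝ) + N - ((j : ℕ) + 1) := by linarith
      have hDpos : (0:ℝ) < (M : ℝ) + N - ((j : ℕ) + 1) := by linarith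
      have h1 : 1/((M : ℝ) + N - ((j : ℕ) + 1)) ≤ 1/N := by
        apply one_div_le_one_div_of_le hN0 hD
      have heq : 1/(N:ℝ) - 1/((M : ℝ) + N - ((j : ℕ) + 1))
          = (((M : ℝ) + N - ((j : ℕ) + 1)) - N) / ((N:ℝ) * ((M : ℝ) + N - ((j : ℕ) + 1))) := by
        field_simp
      have h2 : (((M : ℝ) + N - ((j : ℕ) + 1)) - N) / ((N:ℝ) * ((M : ℝ) + N - ((j : ℕ) + 1)))
          ≤ (M:ℝ)/N^2 := by
        apply div_le_div₀ hM0 (by linarith) (by positivity)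
        nlinarith
      have h3 : |1/((M : ℝ) + N - ((j : ℕ) + 1)) - 1/N| ≤ (M:ℝ)/N^2 := by
        rw [abs_sub_comm, abs_of_nonneg (by linarith)]
        linarith
      have h4 : |1 - y j ^ 2| ≤ 1 + 2*(M:ℝ) := by
        rw [abs_le]
        constructor <;> nlinarith [sq_nonneg (y j), husq j]
      rw [abs_mul]
      exact mul_le_mul h4 h3 (abs_nonneg _) (by positivity)
    have hsum_eq : ∑ j : Fin M, (1 - y j ^ 2) / ((M : ℝ) + N - ((j : ℕ) + 1))
        = ((M:ℝ) - ∑ i, y i ^ 2)/N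
          + ∑ j : Fin M, (1 - y j ^ 2) * (1/((M : ℝ) + N - ((j : ℕ) + 1)) - 1/N) := by
      calc ∑ j : Fin M, (1 - y j ^ 2) / ((M : ℝ) + N - ((j : ℕ) + 1))
          = ∑ j : Fin M, ((1 - y j ^ 2)/(N:ℝ)
            + (1 - y j ^ 2) * (1/((M : ℝ) + N - ((j : ℕ) + 1)) - 1/N)) :=
            Finset.sum_congr rfl (fun j _ => by
              have hj : ((j:ℕ):ℝ) + 1 ≤ (M:ℝ) := by exact_mod_cast j.isLt
              have hDpos : (0:ℝ) < (M : ℝ) + N - ((j : ℕ) + 1) := by linarith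
              field_simp
              ring)
        _ = (∑ j : Fin M, (1 - y j ^ 2))/(N:ℝ)
            + ∑ j : Fin M, (1 - y j ^ 2) * (1/((M : ℝ) + N - ((j : ℕ) + 1)) - 1/N) := by
            rw [Finset.sum_add_distrib, Finset.sum_div]
        _ = ((M:ℝ) - ∑ i, y i ^ 2)/(N:ℝ)
            + ∑ j : Fin M, (1 - y j ^ 2) * (1/((M : ℝ) + N - ((j : ℕ) + 1)) - 1/N) := by
            congr 1
            rw [Finset.sum_sub_distrib, Finset.sum_const, Finset.card_univ, Fintype.card_fin,
              nsmul_eq_mul, mul_one]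
    have h5 : |∑ j : Fin M, (1 - y j ^ 2) / ((M : ℝ) + N - ((j : ℕ) + 1))|
        ≤ δ*(M:ℝ)/N + ((1+2*(M:ℝ)) * ((M:ℝ)/N^2)) * M := by
      rw [hsum_eq]
      have ha : |((M:ℝ) - ∑ i, y i ^ 2)/N| ≤ δ*(M:ℝ)/N := by
        rw [abs_div, abs_of_pos hN0, abs_sub_comm]
        exact div_le_div₀ (by positivity) (le_trans hy (le_of_eq (by ring))) hN0 le_rfl
      have hb : |∑ j : Fin M, (1 - y j ^ 2) * (1/((M : ℝ) + N - ((j : ℕ) + 1)) - 1/N)|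
          ≤ ((1+2*(M:ℝ)) * ((M:ℝ)/N^2)) * M := by
        calc |∑ j : Fin M, (1 - y j ^ 2) * (1/((M : ℝ) + N - ((j : ℕ) + 1)) - 1/N)|
            ≤ ∑ j : Fin M, |(1 - y j ^ 2) * (1/((M : ℝ) + N - ((j : ℕ) + 1)) - 1/N)| :=
              Finset.abs_sum_le_sum_abs _ _
          _ ≤ ∑ _j : Fin M, (1+2*(M:ℝ)) * ((M:ℝ)/N^2) := Finset.sum_le_sum (fun j _ => herr j)
          _ = ((1+2*(M:ℝ)) * ((M:ℝ)/N^2)) * M := by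
              rw [Finset.sum_const, Finset.card_univ, Fintype.card_fin, nsmul_eq_mul]; ring
      exact le_trans (abs_add_le _ _) (add_le_add ha hb)
    have hu1' : ∀ j ∈ (Finset.univ : Finset (Fin M)),
        |(1 - y j ^ 2) / ((M : ℝ) + N - ((j : ℕ) + 1))| ≤ 1 := fun j _ => hu1 j
    have h6 := prod_one_add_err Finset.univ
      (fun j : Fin M => (1 - y j ^ 2) / ((M : ℝ) + N - ((j : ℕ) + 1))) hu1'
    have hsumabs : ∑ j : Fin M, |(1 - y j ^ 2) / ((M : ℝ) + N - ((j : ℕ) + 1))|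
        ≤ (M:ℝ)*((1+2*(M:ℝ))/N) := by
      calc ∑ j : Fin M, |(1 - y j ^ 2) / ((M : ℝ) + N - ((j : ℕ) + 1))|
          ≤ ∑ _j : Fin M, (1+2*(M:ℝ))/N := Finset.sum_le_sum (fun j _ => hu j)
        _ = (M:ℝ)*((1+2*(M:ℝ))/N) := by
            rw [Finset.sum_const, Finset.card_univ, Fintype.card_fin, nsmul_eq_mul]
    have hsumabs0 : (0:ℝ) ≤ ∑ j : Fin M, |(1 - y j ^ 2) / ((M : ℝ) + N - ((j : ℕ) + 1))| :=
      Finset.sum_nonneg fun j _ => abs_nonneg _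
    have h7 : (∑ j : Fin M, |(1 - y j ^ 2) / ((M : ℝ) + N - ((j : ℕ) + 1))|) ^ 2
          * 3 ^ (Finset.univ : Finset (Fin M)).card
        ≤ ((M:ℝ)*((1+2*(M:ℝ))/N))^2 * 3^M := by
      apply mul_le_mul (pow_le_pow_left₀ hsumabs0 hsumabs 2) ?_ (by positivity) (by positivity)
      rw [Finset.card_univ, Fintype.card_fin]
    calc |(∏ j : Fin M, (1 + (1 - y j ^ 2) / ((M : ℝ) + N - ((j : ℕ) + 1)))) - 1|
        = |(∑ j : Fin M, (1 - y j ^ 2) / ((M : ℝ) + N - ((j : ℕ) + 1)))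
          + ((∏ j : Fin M, (1 + (1 - y j ^ 2) / ((M : ℝ) + N - ((j : ℕ) + 1)))) - 1
            - ∑ j : Fin M, (1 - y j ^ 2) / ((M : ℝ) + N - ((j : ℕ) + 1)))| := by congr 1; ring
      _ ≤ |∑ j : Fin M, (1 - y j ^ 2) / ((M : ℝ) + N - ((j : ℕ) + 1))|
          + |(∏ j : Fin M, (1 + (1 - y j ^ 2) / ((M : ℝ) + N - ((j : ℕ) + 1)))) - 1
            - ∑ j : Fin M, (1 - y j ^ 2) / ((M : ℝ) + N - ((j : ℕ) + 1))| := abs_add_le _ _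
      _ ≤ (δ*(M:ℝ)/N + ((1+2*(M:ℝ)) * ((M:ℝ)/N^2)) * M)
          + ((M:ℝ)*((1+2*(M:ℝ))/N))^2 * 3^M := add_le_add h5 (le_trans h6 h7)
      _ = (M:ℝ)*δ/N + (M:ℝ)^2*(1+2*(M:ℝ))/N^2 + ((M:ℝ)*((1+2*(M:ℝ))/N))^2 * 3^M := by ring
  · intro i
    rw [(coeff_sq M N y hpos ((i:ℕ)+1)).2]
    exact prod_close _ hc0 hc1 hu _

lemma key (M N : ℕ) (hN : 1 ≤ N) {ε δ : ℝ} (hε : 0 < ε) (hδ0 : 0 ≤ δ) (hδ1 : δ ≤ 1)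
    (hc : (1 + 2*(M:ℝ))/(N:ℝ) ≤ 1/2)
    (ht3 : (M:ℝ) * ((1 + 2*(M:ℝ))/(N:ℝ)) * 3 ^ M ≤ 1)
    (hq1 : (M:ℝ)*δ/N + (M:ℝ)^2*(1+2*(M:ℝ))/N^2 + ((M:ℝ)*((1+2*(M:ℝ))/N))^2 * 3^M ≤ 1)
    (hfin : 3*(1+ε)*((M:ℝ)*δ + (M:ℝ)^2*(1+2*(M:ℝ))/N + (M:ℝ)^2*(1+2*(M:ℝ))^2*3^M/N)
        + (1+ε)*((M:ℝ)*δ) + 16*(M:ℝ)^3*(1+2*(M:ℝ))/N ≤ ε*M/2)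
    (Qe Sσ : ℝ) (hQe : |Qe| ≤ 1) (hSσ : |Sσ - Qe| ≤ ε)
    (x x' : Fin M → ℝ)
    (hx2 : |∑ i, x i ^ 2 - (M:ℝ)| ≤ δ * M) (hx'2 : |∑ i, x' i ^ 2 - (M:ℝ)| ≤ δ * M)
    (hW : |∑ i, x i * x' i - M * Qe| ≤ M * (δ*(1+ε) + ε/2)) :
    |(1/((N:ℝ)+M)) * ((coeff M N x (M+1) * coeff M N x' (M+1)) * ((N:ℝ) * Sσ)
      + ∑ i : Fin M, (coeff M N x ((i:ℕ)+1) * x i) * (coeff M N x' ((i:ℕ)+1) * x' i)) - Qe| ≤ ε := by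
  have hM0 : (0:ℝ) ≤ M := Nat.cast_nonneg M
  have hN1 : (1:ℝ) ≤ N := by exact_mod_cast hN
  have hN0 : (0:ℝ) < N := by linarith
  have hK0 : (0:ℝ) < (N:ℝ) + M := by linarith
  have h3M : (1:ℝ) ≤ 3 ^ M := by
    calc (1:ℝ) = 1 ^ M := (one_pow _).symm
    _ ≤ 3 ^ M := pow_le_pow_left₀ zero_le_one (by norm_num) M
  obtain ⟨hA0, hA2, hAi⟩ := coeff_close_one (M := M) (N := N) hN1 hδ0 hδ1 hc hx2
  obtain ⟨hA0', hA2', hAi'⟩ := coeff_close_one (M := M) (N := N) hN1 hδ0 hδ1 hc hx'2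
  set tt : ℝ := (M:ℝ) * ((1 + 2*(M:ℝ))/(N:ℝ)) with htt
  set qq : ℝ := (M:ℝ)*δ/N + (M:ℝ)^2*(1+2*(M:ℝ))/N^2 + tt^2 * 3^M with hqq
  have ht0 : (0:ℝ) ≤ tt := by rw [htt]; positivity
  have ht1 : tt ≤ 1 := le_trans (le_mul_of_one_le_right ht0 h3M) ht3
  have hq0 : (0:ℝ) ≤ qq := by rw [hqq, htt]; positivity
  -- bound on the product of the two (M+1)-coefficients
  have hAA' : |coeff M N x (M+1) * coeff M N x' (M+1) - 1| ≤ 3 * qq := by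
    have h1 : |coeff M N x (M+1) * coeff M N x' (M+1) - 1|
        ≤ |(coeff M N x (M+1) * coeff M N x' (M+1))^2 - 1| :=
      abs_sub_one_le_sq (mul_nonneg (hA0 _) (hA0' _))
    have h2 : (coeff M N x (M+1) * coeff M N x' (M+1))^2 - 1
        = (coeff M N x (M+1)^2 - 1) + (coeff M N x' (M+1)^2 - 1)
          + (coeff M N x (M+1)^2 - 1) * (coeff M N x' (M+1)^2 - 1) := by ring
    have h3 : |(coeff M N x (M+1) * coeff M N x' (M+1))^2 - 1| ≤ qq + qq + qq * qq := by
      rw [h2]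
      refine le_trans (abs_add_le _ _) (add_le_add (le_trans (abs_add_le _ _) (add_le_add hA2 hA2')) ?_)
      rw [abs_mul]
      exact mul_le_mul hA2 hA2' (abs_nonneg _) hq0
    have hqsq : qq * qq ≤ qq := mul_le_of_le_one_left hq0 hq1
    linarith
  -- bound on the lower coefficients products
  have hb : ∀ i : Fin M, |coeff M N x ((i:ℕ)+1) * coeff M N x' ((i:ℕ)+1) - 1| ≤ 8 * tt := by
    intro i
    have h1 : |coeff M N x ((i:ℕ)+1) * coeff M N x' ((i:ℕ)+1) - 1|
        ≤ |(coeff M N x ((i:ℕ)+1) * coeff M N x' ((i:ℕ)+1))^2 - 1| :=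
      abs_sub_one_le_sq (mul_nonneg (hA0 _) (hA0' _))
    have h2 : (coeff M N x ((i:ℕ)+1) * coeff M N x' ((i:ℕ)+1))^2 - 1
        = (coeff M N x ((i:ℕ)+1)^2 - 1) + (coeff M N x' ((i:ℕ)+1)^2 - 1)
          + (coeff M N x ((i:ℕ)+1)^2 - 1) * (coeff M N x' ((i:ℕ)+1)^2 - 1) := by ring
    have htsq : tt^2 * 3^M ≤ tt := by
      calc tt^2 * 3^M = tt * (tt * 3^M) := by ring
        _ ≤ tt * 1 := mul_le_mul_of_nonneg_left ht3 ht0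
        _ = tt := mul_one tt
    have hg : tt + tt^2 * 3^M ≤ 2 * tt := by linarith
    have h3 : |(coeff M N x ((i:ℕ)+1) * coeff M N x' ((i:ℕ)+1))^2 - 1|
        ≤ 2 * tt + 2 * tt + (2 * tt) * (2 * tt) := by
      rw [h2]
      refine le_trans (abs_add_le _ _) (add_le_add (le_trans (abs_add_le _ _)
        (add_le_add (le_trans (hAi i) hg) (le_trans (hAi' i) hg))) ?_)
      rw [abs_mul]
      exact mul_le_mul (le_trans (hAi i) hg) (le_trans (hAi' i) hg) (abs_nonneg _) (by positivity)
    have httsq : tt * tt ≤ tt := mul_le_of_le_one_left ht0 ht1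
    linarith
  -- assembly
  have hxx' : ∀ i : Fin M, |x i * x' i| ≤ 2 * (M:ℝ) := fun i =>
    abs_mul_le_of_sq_le (sq_le_two_mul hδ1 hx2 i) (sq_le_two_mul hδ1 hx'2 i)
  have hsum2 : ∑ i : Fin M, (coeff M N x ((i:ℕ)+1) * x i) * (coeff M N x' ((i:ℕ)+1) * x' i)
      = (∑ i, x i * x' i)
        + ∑ i : Fin M, (coeff M N x ((i:ℕ)+1) * coeff M N x' ((i:ℕ)+1) - 1) * (x i * x' i) := by
    rw [← Finset.sum_add_distrib]
    exact Finset.sum_congr rfl fun i _ => by ring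
  have hE2 : |∑ i : Fin M, (coeff M N x ((i:ℕ)+1) * coeff M N x' ((i:ℕ)+1) - 1) * (x i * x' i)|
      ≤ (M:ℝ) * (8 * tt * (2 * (M:ℝ))) := by
    calc |∑ i : Fin M, (coeff M N x ((i:ℕ)+1) * coeff M N x' ((i:ℕ)+1) - 1) * (x i * x' i)|
        ≤ ∑ i : Fin M, |(coeff M N x ((i:ℕ)+1) * coeff M N x' ((i:ℕ)+1) - 1) * (x i * x' i)| :=
          Finset.abs_sum_le_sum_abs _ _
      _ ≤ ∑ _i : Fin M, 8 * tt * (2*(M:ℝ)) := Finset.sum_le_sum fun i _ => by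
          rw [abs_mul]
          exact mul_le_mul (hb i) (hxx' i) (abs_nonneg _) (by positivity)
      _ = (M:ℝ) * (8 * tt * (2 * (M:ℝ))) := by
          rw [Finset.sum_const, Finset.card_univ, Fintype.card_fin, nsmul_eq_mul]
  have hS1 : |Sσ| ≤ 1 + ε := by
    calc |Sσ| = |(Sσ - Qe) + Qe| := by congr 1; ring
      _ ≤ |Sσ - Qe| + |Qe| := abs_add_le _ _
      _ ≤ 1 + ε := by linarith
  have hterm1 : |coeff M N x (M+1) * coeff M N x' (M+1) * Sσ - Qe| ≤ 3*qq*(1+ε) + ε := by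
    calc |coeff M N x (M+1) * coeff M N x' (M+1) * Sσ - Qe|
        = |(coeff M N x (M+1) * coeff M N x' (M+1) - 1)*Sσ + (Sσ - Qe)| := by congr 1; ring
      _ ≤ |(coeff M N x (M+1) * coeff M N x' (M+1) - 1)*Sσ| + |Sσ - Qe| := abs_add_le _ _
      _ ≤ 3*qq*(1+ε) + ε := by
          rw [abs_mul]
          exact add_le_add (mul_le_mul hAA' hS1 (abs_nonneg _) (by positivity)) hSσ
  rw [hsum2]
  have hid : (1/((N:ℝ)+M)) * ((coeff M N x (M+1) * coeff M N x' (M+1)) * ((N:ℝ) * Sσ)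
      + ((∑ i, x i * x' i)
        + ∑ i : Fin M, (coeff M N x ((i:ℕ)+1) * coeff M N x' ((i:ℕ)+1) - 1) * (x i * x' i))) - Qe
      = (1/((N:ℝ)+M)) * ((N:ℝ)*(coeff M N x (M+1) * coeff M N x' (M+1) * Sσ - Qe)
        + ((∑ i, x i * x' i) - (M:ℝ)*Qe)
        + ∑ i : Fin M, (coeff M N x ((i:ℕ)+1) * coeff M N x' ((i:ℕ)+1) - 1) * (x i * x' i)) := by
    field_simp
    ring
  rw [hid, abs_mul, abs_of_pos (by positivity : (0:ℝ) < 1/((N:ℝ)+M))]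
  have habs : |(N:ℝ)*(coeff M N x (M+1) * coeff M N x' (M+1) * Sσ - Qe)
        + ((∑ i, x i * x' i) - (M:ℝ)*Qe)
        + ∑ i : Fin M, (coeff M N x ((i:ℕ)+1) * coeff M N x' ((i:ℕ)+1) - 1) * (x i * x' i)|
      ≤ (N:ℝ)*(3*qq*(1+ε) + ε) + (M:ℝ)*(δ*(1+ε) + ε/2) + (M:ℝ) * (8 * tt * (2 * (M:ℝ))) := by
    refine le_trans (abs_add_le _ _) (add_le_add (le_trans (abs_add_le _ _) (add_le_add ?_ hW)) hE2)
    rw [abs_mul, abs_of_pos hN0]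
    exact mul_le_mul_of_nonneg_left hterm1 (le_of_lt hN0)
  refine le_trans (mul_le_mul_of_nonneg_left habs (by positivity)) ?_
  have hXle : (N:ℝ)*(3*qq*(1+ε) + ε) + (M:ℝ)*(δ*(1+ε) + ε/2) + (M:ℝ) * (8 * tt * (2 * (M:ℝ)))
      ≤ ε*((N:ℝ)+M) := by
    have hnq : (N:ℝ) * qq = (M:ℝ)*δ + (M:ℝ)^2*(1+2*(M:ℝ))/N + (M:ℝ)^2*(1+2*(M:ℝ))^2*3^M/N := by
      rw [hqq, htt]
      field_simp
    have ht' : (M:ℝ)*(8*tt*(2*(M:ℝ))) = 16*(M:ℝ)^3*(1+2*(M:ℝ))/N := by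
      rw [htt]; field_simp; ring
    calc (N:ℝ)*(3*qq*(1+ε) + ε) + (M:ℝ)*(δ*(1+ε) + ε/2) + (M:ℝ) * (8 * tt * (2 * (M:ℝ)))
        = 3*(1+ε)*((N:ℝ)*qq) + ε*(N:ℝ) + (1+ε)*((M:ℝ)*δ) + ε*(M:ℝ)/2
          + 16*(M:ℝ)^3*(1+2*(M:ℝ))/N := by rw [← ht']; ring
      _ = 3*(1+ε)*((M:ℝ)*δ + (M:ℝ)^2*(1+2*(M:ℝ))/N + (M:ℝ)^2*(1+2*(M:ℝ))^2*3^M/N)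
          + ε*(N:ℝ) + (1+ε)*((M:ℝ)*δ) + ε*(M:ℝ)/2 + 16*(M:ℝ)^3*(1+2*(M:ℝ))/N := by rw [hnq]
      _ ≤ ε*((N:ℝ)+M) := by linarith [hfin]
  calc 1/((N:ℝ)+M) * ((N:ℝ)*(3*qq*(1+ε) + ε) + (M:ℝ)*(δ*(1+ε) + ε/2)
        + (M:ℝ) * (8 * tt * (2 * (M:ℝ))))
      ≤ 1/((N:ℝ)+M) * (ε*((N:ℝ)+M)) := mul_le_mul_of_nonneg_left hXle (by positivity)
    _ = ε := by field_simp


/-- Lemma `split_cavity`.  Fix `n, M ≥ 1` and a constraint matrix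
`Q`.  For every `ε > 0` there exist `δ ∈ (0, ε)` and `N₀` such that for all
`N ≥ N₀`: if `σ ∈ Q_N^ε` and `ω ∈ Ω_M^{ε/2, δ}`, then the transformed concatenated
configuration `ρ̃ = (σ̃, ω̃)` with `σ̃(j) = a_{M+1}(ω(j)) σ(j)` and
`ω̃_i(j) = a_i(ω(j)) ω_i(j)` satisfies `‖R(ρ̃, ρ̃) - Q‖_∞ ≤ ε`. -/
theorem stmt12 (n M : ℕ) (hn : 1 ≤ n) (hM : 1 ≤ M)
    (Q : Matrix (Fin n) (Fin n) ℝ) (hQ : Q.PosSemidef)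
    (hQdiag : ∀ j, Q j j = 1) (hQoff : ∀ j j', |Q j j'| ≤ 1) :
    ∀ ε : ℝ, 0 < ε → ∃ δ : ℝ, 0 < δ ∧ δ < ε ∧ ∃ N₀ : ℕ, ∀ N : ℕ, N₀ ≤ N →
      ∀ σ : Fin n → Fin N → ℝ,
        (∀ j, ∑ i, σ j i ^ 2 = (N : ℝ)) → supNorm (overlap σ σ - Q) ≤ ε →
      ∀ ω : Fin n → Fin M → ℝ,
        (∃ s : Fin n → ℝ, ∃ τ : Fin n → Fin M → ℝ,
          (∀ j, Real.sqrt (1 - δ) ≤ s j ∧ s j ≤ Real.sqrt (1 + δ)) ∧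
          (∀ j, ∑ i, τ j i ^ 2 = (M : ℝ)) ∧
          supNorm (overlap τ τ - Q) ≤ ε / 2 ∧
          (∀ j, ω j = s j • τ j)) →
        supNorm
          (overlap
            (fun j => Fin.append
              (fun i : Fin N => coeff M N (ω j) (M + 1) * σ j i)
              (fun i : Fin M => coeff M N (ω j) ((i : ℕ) + 1) * ω j i))
            (fun j => Fin.append
              (fun i : Fin N => coeff M N (ω j) (M + 1) * σ j i)
              (fun i : Fin M => coeff M N (ω j) ((i : ℕ) + 1) * ω j i)) - Q) ≤ ε := by
  intro ε hε
  have hM0 : (0:ℝ) < M := by exact_mod_cast hM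
  set δ : ℝ := ε/(16*(1+ε)) with hδdef
  have hδ0 : 0 < δ := by positivity
  have hδε : δ < ε := by
    rw [hδdef, div_lt_iff₀ (by positivity)]
    nlinarith
  have hδ1 : δ ≤ 1 := by
    rw [hδdef, div_le_one (by positivity)]
    nlinarith
  refine ⟨δ, hδ0, hδε, ?_⟩
  obtain ⟨N₀, hN₀⟩ := exists_nat_gt (max 2 (max (2*(1+2*(M:ℝ)))
    (max ((M:ℝ)*(1+2*(M:ℝ))*3^M)
      (max ((M:ℝ)*δ + (M:ℝ)^2*(1+2*(M:ℝ)) + (M:ℝ)^2*(1+2*(M:ℝ))^2*3^M)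
        (4*(3*(1+ε)*((M:ℝ)^2*(1+2*(M:ℝ)) + (M:ℝ)^2*(1+2*(M:ℝ))^2*3^M)
          + 16*(M:ℝ)^3*(1+2*(M:ℝ)))/(ε*(M:ℝ)))))))
  refine ⟨N₀, ?_⟩
  intro N hNN σ hσnorm hσover ω hω
  obtain ⟨s, τ, hs, hτnorm, hτover, hωeq⟩ := hω
  have hTN : (max 2 (max (2*(1+2*(M:ℝ)))
    (max ((M:ℝ)*(1+2*(M:ℝ))*3^M)
      (max ((M:ℝ)*δ + (M:ℝ)^2*(1+2*(M:ℝ)) + (M:ℝ)^2*(1+2*(M:ℝ))^2*3^M)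
        (4*(3*(1+ε)*((M:ℝ)^2*(1+2*(M:ℝ)) + (M:ℝ)^2*(1+2*(M:ℝ))^2*3^M)
          + 16*(M:ℝ)^3*(1+2*(M:ℝ)))/(ε*(M:ℝ)))))) : ℝ) < N :=
    lt_of_lt_of_le hN₀ (by exact_mod_cast hNN)
  have hN1 : (1:ℝ) ≤ N := by
    have h2 : (2:ℝ) ≤ N := le_of_lt (lt_of_le_of_lt (le_max_left _ _) hTN)
    linarith
  have hN : 1 ≤ N := by exact_mod_cast hN1
  have hN0' : (0:ℝ) < N := by linarith
  have hfrac : ∀ X θ : ℝ, 0 ≤ X → 0 < θ → X/θ ≤ (max 2 (max (2*(1+2*(M:ℝ)))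
    (max ((M:ℝ)*(1+2*(M:ℝ))*3^M)
      (max ((M:ℝ)*δ + (M:ℝ)^2*(1+2*(M:ℝ)) + (M:ℝ)^2*(1+2*(M:ℝ))^2*3^M)
        (4*(3*(1+ε)*((M:ℝ)^2*(1+2*(M:ℝ)) + (M:ℝ)^2*(1+2*(M:ℝ))^2*3^M)
          + 16*(M:ℝ)^3*(1+2*(M:ℝ)))/(ε*(M:ℝ)))))) : ℝ) → X/(N:ℝ) ≤ θ := by
    intro X θ hX hθ hle
    have h1 : X/θ ≤ (N:ℝ) := le_trans hle (le_of_lt hTN)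
    rw [div_le_iff₀ hθ] at h1
    rw [div_le_iff₀ hN0']
    linarith
  -- condition (c)
  have hc : (1 + 2*(M:ℝ))/(N:ℝ) ≤ 1/2 := by
    apply hfrac _ _ (by positivity) (by norm_num)
    calc (1 + 2*(M:ℝ))/(1/2) = 2*(1+2*(M:ℝ)) := by ring
      _ ≤ _ := le_trans (le_max_left _ _) (le_max_right _ _)
  -- condition (t3)
  have ht3 : (M:ℝ) * ((1 + 2*(M:ℝ))/(N:ℝ)) * 3 ^ M ≤ 1 := by
    have h1 : ((M:ℝ)*(1+2*(M:ℝ))*3^M)/(N:ℝ) ≤ 1 := by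
      apply hfrac _ _ (by positivity) one_pos
      calc ((M:ℝ)*(1+2*(M:ℝ))*3^M)/1 = (M:ℝ)*(1+2*(M:ℝ))*3^M := by ring
        _ ≤ _ := le_trans (le_trans (le_max_left _ _) (le_max_right _ _)) (le_max_right _ _)
    calc (M:ℝ) * ((1 + 2*(M:ℝ))/(N:ℝ)) * 3 ^ M = ((M:ℝ)*(1+2*(M:ℝ))*3^M)/(N:ℝ) := by ring
      _ ≤ 1 := h1
  -- condition (q1)
  have hq1 : (M:ℝ)*δ/N + (M:ℝ)^2*(1+2*(M:ℝ))/N^2 + ((M:ℝ)*((1+2*(M:ℝ))/N))^2 * 3^M ≤ 1 := by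
    have hNsq : (N:ℝ) ≤ (N:ℝ)^2 := by nlinarith
    have e1 : (M:ℝ)^2*(1+2*(M:ℝ))/N^2 ≤ (M:ℝ)^2*(1+2*(M:ℝ))/N :=
      div_le_div₀ (by positivity) le_rfl hN0' hNsq
    have e2 : ((M:ℝ)*((1+2*(M:ℝ))/N))^2 * 3^M ≤ (M:ℝ)^2*(1+2*(M:ℝ))^2*3^M/N := by
      have e : ((M:ℝ)*((1+2*(M:ℝ))/N))^2 * 3^M = (M:ℝ)^2*(1+2*(M:ℝ))^2*3^M/N^2 := by ring
      rw [e]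
      exact div_le_div₀ (by positivity) le_rfl hN0' hNsq
    have h1 : ((M:ℝ)*δ + (M:ℝ)^2*(1+2*(M:ℝ)) + (M:ℝ)^2*(1+2*(M:ℝ))^2*3^M)/(N:ℝ) ≤ 1 := by
      apply hfrac _ _ (by positivity) one_pos
      calc ((M:ℝ)*δ + (M:ℝ)^2*(1+2*(M:ℝ)) + (M:ℝ)^2*(1+2*(M:ℝ))^2*3^M)/1
          = (M:ℝ)*δ + (M:ℝ)^2*(1+2*(M:ℝ)) + (M:ℝ)^2*(1+2*(M:ℝ))^2*3^M := by ring
        _ ≤ _ := le_trans (le_trans (le_trans (le_max_left _ _) (le_max_right _ _))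
            (le_max_right _ _)) (le_max_right _ _)
    have e3 : (M:ℝ)*δ/N + (M:ℝ)^2*(1+2*(M:ℝ))/N + (M:ℝ)^2*(1+2*(M:ℝ))^2*3^M/N
        = ((M:ℝ)*δ + (M:ℝ)^2*(1+2*(M:ℝ)) + (M:ℝ)^2*(1+2*(M:ℝ))^2*3^M)/(N:ℝ) := by ring
    linarith
  -- condition (fin)
  have hfin : 3*(1+ε)*((M:ℝ)*δ + (M:ℝ)^2*(1+2*(M:ℝ))/N + (M:ℝ)^2*(1+2*(M:ℝ))^2*3^M/N)
      + (1+ε)*((M:ℝ)*δ) + 16*(M:ℝ)^3*(1+2*(M:ℝ))/N ≤ ε*M/2 := by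
    have hC8 : (3*(1+ε)*((M:ℝ)^2*(1+2*(M:ℝ)) + (M:ℝ)^2*(1+2*(M:ℝ))^2*3^M)
        + 16*(M:ℝ)^3*(1+2*(M:ℝ)))/(N:ℝ) ≤ ε*(M:ℝ)/4 := by
      apply hfrac _ _ (by positivity) (by positivity)
      calc (3*(1+ε)*((M:ℝ)^2*(1+2*(M:ℝ)) + (M:ℝ)^2*(1+2*(M:ℝ))^2*3^M)
            + 16*(M:ℝ)^3*(1+2*(M:ℝ)))/(ε*(M:ℝ)/4)
          = 4*(3*(1+ε)*((M:ℝ)^2*(1+2*(M:ℝ)) + (M:ℝ)^2*(1+2*(M:ℝ))^2*3^M)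
            + 16*(M:ℝ)^3*(1+2*(M:ℝ)))/(ε*(M:ℝ)) := by
            rw [div_div_eq_mul_div]
            ring
        _ ≤ _ := le_trans (le_trans (le_trans (le_max_right _ _) (le_max_right _ _))
            (le_max_right _ _)) (le_max_right _ _)
    have h4δ : 4*(1+ε)*((M:ℝ)*δ) = ε*(M:ℝ)/4 := by
      rw [hδdef]
      field_simp
      ring
    have e : 3*(1+ε)*((M:ℝ)*δ + (M:ℝ)^2*(1+2*(M:ℝ))/N + (M:ℝ)^2*(1+2*(M:ℝ))^2*3^M/N)
        + (1+ε)*((M:ℝ)*δ) + 16*(M:ℝ)^3*(1+2*(M:ℝ))/N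
        = 4*(1+ε)*((M:ℝ)*δ) + (3*(1+ε)*((M:ℝ)^2*(1+2*(M:ℝ)) + (M:ℝ)^2*(1+2*(M:ℝ))^2*3^M)
          + 16*(M:ℝ)^3*(1+2*(M:ℝ)))/(N:ℝ) := by ring
    rw [e, h4δ]
    linarith
  -- facts about s
  have hδ1' : (0:ℝ) ≤ 1 - δ := by linarith
  have hδ1'' : (0:ℝ) ≤ 1 + δ := by linarith
  have hs0 : ∀ j, 0 ≤ s j := fun j => le_trans (Real.sqrt_nonneg _) (hs j).1
  have hssq : ∀ j, |s j ^ 2 - 1| ≤ δ := by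
    intro j
    have h1 : s j ^ 2 ≤ 1 + δ := by
      calc s j ^ 2 ≤ Real.sqrt (1+δ) ^ 2 := pow_le_pow_left₀ (hs0 j) (hs j).2 2
        _ = 1 + δ := Real.sq_sqrt hδ1''
    have h2 : 1 - δ ≤ s j ^ 2 := by
      calc (1:ℝ) - δ = Real.sqrt (1-δ) ^ 2 := (Real.sq_sqrt hδ1').symm
        _ ≤ s j ^ 2 := pow_le_pow_left₀ (Real.sqrt_nonneg _) (hs j).1 2
    rw [abs_le]; constructor <;> linarith
  have hss : ∀ j j', |s j * s j' - 1| ≤ δ := by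
    intro j j'
    have h1 : s j * s j' ≤ 1 + δ := by
      calc s j * s j' ≤ Real.sqrt (1+δ) * Real.sqrt (1+δ) :=
            mul_le_mul (hs j).2 (hs j').2 (hs0 j') (Real.sqrt_nonneg _)
        _ = 1 + δ := Real.mul_self_sqrt hδ1''
    have h2 : 1 - δ ≤ s j * s j' := by
      calc (1:ℝ) - δ = Real.sqrt (1-δ) * Real.sqrt (1-δ) := (Real.mul_self_sqrt hδ1').symm
        _ ≤ s j * s j' := mul_le_mul (hs j).1 (hs j').1 (Real.sqrt_nonneg _) (hs0 j)
    rw [abs_le]; constructor <;> linarith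
  -- norm facts about ω
  have hωi : ∀ j i, ω j i = s j * τ j i := by
    intro j i
    rw [hωeq j]
    simp
  have hx2 : ∀ j, |∑ i, ω j i ^ 2 - (M:ℝ)| ≤ δ * M := by
    intro j
    have h1 : ∑ i, ω j i ^ 2 = s j ^ 2 * (M:ℝ) := by
      calc ∑ i, ω j i ^ 2 = ∑ i, s j ^ 2 * τ j i ^ 2 :=
            Finset.sum_congr rfl fun i _ => by rw [hωi j i]; ring
        _ = s j ^ 2 * ∑ i, τ j i ^ 2 := by rw [Finset.mul_sum]
        _ = s j ^ 2 * (M:ℝ) := by rw [hτnorm j]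
    rw [h1, show s j ^ 2 * (M:ℝ) - M = (s j ^ 2 - 1) * (M:ℝ) by ring, abs_mul,
      abs_of_nonneg (le_of_lt hM0)]
    exact mul_le_mul_of_nonneg_right (hssq j) (le_of_lt hM0)
  -- per entry bound
  have hNE : Nonempty (Fin n) := ⟨⟨0, hn⟩⟩
  refine supNorm_le_aux _ (fun j j' => ?_)
  rw [Matrix.sub_apply]
  have hQe : |Q j j'| ≤ 1 := hQoff j j'
  have hSσ : |overlap σ σ j j' - Q j j'| ≤ ε := by
    have h := supNorm_aux (overlap σ σ - Q) j j'
    rw [Matrix.sub_apply] at h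
    exact le_trans h hσover
  have hSτ : |overlap τ τ j j' - Q j j'| ≤ ε/2 := by
    have h := supNorm_aux (overlap τ τ - Q) j j'
    rw [Matrix.sub_apply] at h
    exact le_trans h hτover
  have hSτ1 : |overlap τ τ j j'| ≤ 1 + ε := by
    calc |overlap τ τ j j'| = |(overlap τ τ j j' - Q j j') + Q j j'| := by congr 1; ring
      _ ≤ |overlap τ τ j j' - Q j j'| + |Q j j'| := abs_add_le _ _
      _ ≤ 1 + ε := by linarith
  have hW : |∑ i, ω j i * ω j' i - (M:ℝ) * Q j j'| ≤ (M:ℝ) * (δ*(1+ε) + ε/2) := by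
    have hτs : ∑ i, τ j i * τ j' i = (M:ℝ) * overlap τ τ j j' := by
      rw [overlap, Matrix.of_apply, ← mul_assoc, mul_one_div, div_self (ne_of_gt hM0), one_mul]
    have h1 : ∑ i, ω j i * ω j' i = (s j * s j') * ((M:ℝ) * overlap τ τ j j') := by
      calc ∑ i, ω j i * ω j' i = ∑ i, (s j * s j') * (τ j i * τ j' i) :=
            Finset.sum_congr rfl fun i _ => by rw [hωi j i, hωi j' i]; ring
        _ = (s j * s j') * ∑ i, τ j i * τ j' i := by rw [Finset.mul_sum]
        _ = (s j * s j') * ((M:ℝ) * overlap τ τ j j') := by rw [hτs]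
    rw [h1, show (s j * s j') * ((M:ℝ) * overlap τ τ j j') - (M:ℝ) * Q j j'
      = (M:ℝ) * ((s j * s j' - 1) * overlap τ τ j j' + (overlap τ τ j j' - Q j j')) by ring,
      abs_mul, abs_of_nonneg (le_of_lt hM0)]
    apply mul_le_mul_of_nonneg_left ?_ (le_of_lt hM0)
    refine le_trans (abs_add_le _ _) (add_le_add ?_ hSτ)
    rw [abs_mul]
    exact mul_le_mul (hss j j') hSτ1 (abs_nonneg _) (le_of_lt hδ0)
  -- reduce the overlap entry
  have hNs : ∑ i, σ j i * σ j' i = (N:ℝ) * overlap σ σ j j' := by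
    rw [overlap, Matrix.of_apply, ← mul_assoc, mul_one_div, div_self (ne_of_gt hN0'), one_mul]
  rw [overlap, Matrix.of_apply]
  simp only [Fin.sum_univ_add, Fin.append_left, Fin.append_right]
  have hsplit : ∑ i : Fin N, (coeff M N (ω j) (M+1) * σ j i) * (coeff M N (ω j') (M+1) * σ j' i)
      = (coeff M N (ω j) (M+1) * coeff M N (ω j') (M+1)) * ((N:ℝ) * overlap σ σ j j') := by
    calc ∑ i : Fin N, (coeff M N (ω j) (M+1) * σ j i) * (coeff M N (ω j') (M+1) * σ j' i)
        = ∑ i : Fin N, (coeff M N (ω j) (M+1) * coeff M N (ω j') (M+1)) * (σ j i * σ j' i) :=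
          Finset.sum_congr rfl fun i _ => by ring
      _ = (coeff M N (ω j) (M+1) * coeff M N (ω j') (M+1)) * ∑ i, σ j i * σ j' i := by
          rw [Finset.mul_sum]
      _ = _ := by rw [hNs]
  rw [hsplit]
  have hcast : (1:ℝ) / ((N + M : ℕ) : ℝ) = 1 / ((N:ℝ) + M) := by push_cast; ring
  rw [hcast]
  exact key M N hN hε (le_of_lt hδ0) hδ1 hc ht3 hq1 hfin (Q j j') (overlap σ σ j j') hQe hSσ
    (ω j) (ω j') (hx2 j) (hx2 j') hW
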